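/- arXiv:1611.03991 — 3 statements merged into one kernel-verified Lean document; each statement's English description precedes it below -/
import Mathlib

section
/- Every minimal τ-retentive set of a tournament induces an irreducible subtournament; that is, if R is a minimal τ-retentive set of T, there is no partition of R into nonempty sets A and B with every vertex of A dominating every vertex of B in T. -/
variable {V : Type}

/-- Inneighbors of `v` inside the subtournament on `s` (excluding `v` itself). -/
def inn [DecidableEq V] (r : V → V → Prop) [DecidableRel r] (s : Finset V) (v : V) :
    Finset V :=
  (s.filter fun u => r u v).erase v

lemma inn_card_lt [DecidableEq V] (r : V → V → Prop) [DecidableRel r]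
    (s : Finset V) (v : V) (hv : v ∈ s) : (inn r s v).card < s.card := by
  have h1 : inn r s v ⊆ s.erase v := by
    intro x hx
    rcases Finset.mem_erase.mp hx with ⟨hxv, hx2⟩
    exact Finset.mem_erase.mpr ⟨hxv, (Finset.mem_filter.mp hx2).1⟩
  calc (inn r s v).card ≤ (s.erase v).card := Finset.card_le_card h1
    _ < s.card := Finset.card_erase_lt_of_mem hv

/-- The tournament equilibrium set of the subtournament of `r` on `s`:
the union of all minimal τ-retentive sets. -/
def tau [DecidableEq V] (r : V → V → Prop) [DecidableRel r] (s : Finset V) : Set V :=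
  {x | ∃ A : Finset V, x ∈ A ∧ A ⊆ s ∧ A.Nonempty ∧
    (∀ v, v ∈ s → v ∈ A → ((inn r s v).Nonempty → tau r (inn r s v) ⊆ ↑A)) ∧
    ∀ B : Finset V, B ⊆ s → B ⊂ A →
      ¬ (B.Nonempty ∧
        ∀ v, v ∈ s → v ∈ B → ((inn r s v).Nonempty → tau r (inn r s v) ⊆ ↑B))}
termination_by s.card
decreasing_by
  all_goals exact inn_card_lt r s v (by assumption)

/-- `A` is a τ-retentive set of the tournament on `s`. -/
def Retentive [DecidableEq V] (r : V → V → Prop) [DecidableRel r] (s A : Finset V) : Prop :=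
  A ⊆ s ∧ A.Nonempty ∧ ∀ v ∈ A, (inn r s v).Nonempty → tau r (inn r s v) ⊆ ↑A

/-- `A` is a minimal τ-retentive set of the tournament on `s`. -/
def MinRetentive [DecidableEq V] (r : V → V → Prop) [DecidableRel r] (s A : Finset V) : Prop :=
  Retentive r s A ∧ ∀ B, Retentive r s B → B ⊆ A → B = A

/-- `r` is a tournament on the vertex set `s`. -/
def IsTournament (r : V → V → Prop) (s : Finset V) : Prop :=
  (∀ v ∈ s, ¬ r v v) ∧ ∀ u ∈ s, ∀ v ∈ s, u ≠ v → (r u v ↔ ¬ r v u)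

/-- `u` is the captain of `v` in the subtournament on `s`:
`u` dominates `v` and all other inneighbors of `v`. -/
def IsCaptain (r : V → V → Prop) (s : Finset V) (u v : V) : Prop :=
  u ∈ s ∧ v ∈ s ∧ r u v ∧ ∀ w ∈ s, w ≠ u → r w v → r u w

/-- The (undirected) domination graph of the subtournament on `s`. -/
def domGraph (r : V → V → Prop) (s : Finset V) : SimpleGraph V where
  Adj u v := (IsCaptain r s u v ∨ IsCaptain r s v u) ∧ u ≠ v
  symm := by
    constructor
    intro u v h
    exact ⟨h.1.symm, h.2.symm⟩
  loopless := by
    constructor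
    intro u h
    exact h.2 rfl

lemma tau_subset_self [DecidableEq V] (r : V → V → Prop) [DecidableRel r] (t : Finset V) :
    tau r t ⊆ ↑t := by
  intro x hx
  rw [tau] at hx
  rcases hx with ⟨A, hxA, hAt, _⟩
  exact hAt hxA

theorem stmt6 [DecidableEq V] (r : V → V → Prop) [DecidableRel r] (s : Finset V)
    (hT : IsTournament r s) (R : Finset V) (hR : MinRetentive r s R) :
    ¬ ∃ A B : Finset V, A.Nonempty ∧ B.Nonempty ∧ Disjoint A B ∧ A ∪ B = R ∧
      ∀ a ∈ A, ∀ b ∈ B, r a b := by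
  rintro ⟨A, B, hA, hB, hdisj, hunion, hdom⟩
  have hRs : R ⊆ s := hR.1.1
  have hAR : A ⊆ R := hunion ▸ Finset.subset_union_left
  have hBR : B ⊆ R := hunion ▸ Finset.subset_union_right
  have hAret : Retentive r s A := by
    refine ⟨hAR.trans hRs, hA, fun v hvA hne x hx => ?_⟩
    have hvR : v ∈ R := hAR hvA
    have hxR : x ∈ R := hR.1.2.2 v hvR hne hx
    have hxinn : x ∈ inn r s v := tau_subset_self r _ hx
    rcases Finset.mem_erase.mp hxinn with ⟨hxv, hx2⟩
    rcases Finset.mem_filter.mp hx2 with ⟨hxs, hrxv⟩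
    rcases Finset.mem_union.mp (hunion ▸ hxR) with hxA | hxB
    · exact hxA
    · exfalso
      have hrvx : r v x := hdom v hvA x hxB
      exact ((hT.2 x hxs v (hRs hvR) hxv).mp hrxv) hrvx
  have hAeq : A = R := hR.2 A hAret hAR
  rcases hB with ⟨b, hb⟩
  exact Finset.disjoint_left.mp hdisj (hAeq ▸ hBR hb) hb
end

section
/- No tournament on 4 vertices is a τ-retentive tournament; i.e., no tournament T has a minimal τ-retentive set R with |R| = 4. -/
variable {V : Type}

section Lemmas
variable [DecidableEq V] (r : V → V → Prop) [DecidableRel r]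

lemma tau_def' (s : Finset V) : tau r s =
  {x | ∃ A : Finset V, x ∈ A ∧ A ⊆ s ∧ A.Nonempty ∧
    (∀ v, v ∈ s → v ∈ A → ((inn r s v).Nonempty → tau r (inn r s v) ⊆ ↑A)) ∧
    ∀ B : Finset V, B ⊆ s → B ⊂ A →
      ¬ (B.Nonempty ∧
        ∀ v, v ∈ s → v ∈ B → ((inn r s v).Nonempty → tau r (inn r s v) ⊆ ↑B))} := by
  rw [tau]

lemma mem_inn {s : Finset V} {v w : V} :
    w ∈ inn r s v ↔ w ≠ v ∧ w ∈ s ∧ r w v := by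
  simp [inn, and_assoc]

lemma inn_subset (s : Finset V) (v : V) : inn r s v ⊆ s :=
  fun w hw => ((mem_inn r).mp hw).2.1

lemma mem_tau_iff {s : Finset V} {x : V} :
    x ∈ tau r s ↔ ∃ A : Finset V, x ∈ A ∧ MinRetentive r s A := by
  rw [tau_def']
  constructor
  · rintro ⟨A, hx, hAs, hAne, hcond, hmin⟩
    refine ⟨A, hx, ⟨⟨hAs, hAne, fun v hv => hcond v (hAs hv) hv⟩, ?_⟩⟩
    intro B hB hBA
    by_contra hne
    exact hmin B hB.1 (lt_of_le_of_ne hBA hne)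
      ⟨hB.2.1, fun v _ hvB => hB.2.2 v hvB⟩
  · rintro ⟨A, hx, ⟨⟨hAs, hAne, hcond⟩, hmin⟩⟩
    refine ⟨A, hx, hAs, hAne, fun v _ hv => hcond v hv, ?_⟩
    rintro B hBs hBA ⟨hBne, hBcond⟩
    exact hBA.ne (hmin B ⟨hBs, hBne, fun v hv => hBcond v (hBs hv) hv⟩ hBA.subset)

lemma tau_subset (s : Finset V) : tau r s ⊆ ↑s := by
  intro x hx
  obtain ⟨A, hx, hA⟩ := (mem_tau_iff r).mp hx
  exact hA.1.1 hx

lemma tau_nonempty {s : Finset V} (hs : s.Nonempty) : (tau r s).Nonempty := by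
  classical
  have hset : (s.powerset.filter fun A => Retentive r s A).Nonempty := by
    refine ⟨s, Finset.mem_filter.mpr ⟨Finset.mem_powerset_self s, subset_rfl, hs, ?_⟩⟩
    intro v hv _
    exact (tau_subset r (inn r s v)).trans (Finset.coe_subset.mpr (inn_subset r s v))
  obtain ⟨A, hA, hAmin⟩ := Finset.exists_min_image _ Finset.card hset
  rw [Finset.mem_filter] at hA
  obtain ⟨x, hx⟩ := hA.2.2.1
  refine ⟨x, (mem_tau_iff r).mpr ⟨A, hx, hA.2, ?_⟩⟩
  intro B hB hBA
  have hBcard := hAmin B (Finset.mem_filter.mpr ⟨Finset.mem_powerset.mpr hB.1, hB⟩)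
  exact (Finset.eq_of_subset_of_card_le hBA hBcard)

lemma retentive_singleton {s : Finset V} {z : V} (h : Retentive r s {z}) :
    inn r s z = ∅ := by
  by_contra hne
  rw [← ne_eq, ← Finset.nonempty_iff_ne_empty] at hne
  have h1 := h.2.2 z (Finset.mem_singleton_self z) hne
  obtain ⟨y, hy⟩ := tau_nonempty r hne
  have h2 : y = z := by simpa using h1 hy
  have h3 := (mem_inn r).mp ((tau_subset r _) hy)
  exact h3.1 h2

lemma singleton_retentive {s : Finset V} {z : V} (hz : z ∈ s) (h : inn r s z = ∅) :
    Retentive r s {z} := by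
  refine ⟨Finset.singleton_subset_iff.mpr hz, ⟨z, Finset.mem_singleton_self z⟩, ?_⟩
  intro v hv hne
  rw [Finset.mem_singleton] at hv
  subst hv
  rw [h] at hne
  exact absurd hne (by simp)

end Lemmas
section Lemmas2
variable [DecidableEq V] (r : V → V → Prop) [DecidableRel r]

lemma tau_small {s t u : Finset V} (hT : IsTournament r s) (hts : t ⊆ s)
    (htne : t.Nonempty) (hu : u.card ≤ 2) (htau : tau r t ⊆ ↑u) :
    ∃ z ∈ t, tau r t ⊆ {z} ∧ ∀ w ∈ t, w ≠ z → ¬ r w z := by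
  classical
  obtain ⟨x, hx⟩ := tau_nonempty r htne
  obtain ⟨M, hxM, hM⟩ := (mem_tau_iff r).mp hx
  have hMtau : ∀ y ∈ M, y ∈ tau r t := fun y hy => (mem_tau_iff r).mpr ⟨M, hy, hM⟩
  have hMu : M ⊆ u := fun y hy => htau (hMtau y hy)
  have hMt : M ⊆ t := hM.1.1
  have hMne : M.Nonempty := hM.1.2.1
  have hMcard : M.card ≤ 2 := le_trans (Finset.card_le_card hMu) hu
  -- no minimal retentive set of size 2
  have hnot2 : M.card ≠ 2 := by
    intro h2
    obtain ⟨p, q, hpq, hMeq⟩ := Finset.card_eq_two.mp h2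
    have key : ∀ p q : V, p ≠ q → M = {p, q} → r p q → False := by
      intro p q hpq hMeq hrpq
      have hpt : p ∈ t := hMt (by simp [hMeq])
      have hqt : q ∈ t := hMt (by simp [hMeq])
      have hnqp : ¬ r q p := (hT.2 p (hts hpt) q (hts hqt) hpq).mp hrpq
      by_cases hinn : (inn r t p).Nonempty
      · have h1 := hM.1.2.2 p (by simp [hMeq]) hinn
        obtain ⟨y, hy⟩ := tau_nonempty r hinn
        have hyM : y ∈ M := h1 hy
        have hyinn := (mem_inn r).mp ((tau_subset r _) hy)
        rw [hMeq, Finset.mem_insert, Finset.mem_singleton] at hyM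
        rcases hyM with rfl | rfl
        · exact hyinn.1 rfl
        · exact hnqp hyinn.2.2
      · rw [Finset.not_nonempty_iff_eq_empty] at hinn
        have hret := singleton_retentive r hpt hinn
        have := hM.2 {p} hret (by simp [hMeq])
        rw [hMeq] at this
        have : q ∈ ({p} : Finset V) := this ▸ (by simp : q ∈ ({p, q} : Finset V))
        simp at this
        exact hpq this.symm
    by_cases h : r p q
    · exact key p q hpq hMeq h
    · have hqp : r q p := by
        have := hT.2 p (hts (hMt (by simp [hMeq]))) q (hts (hMt (by simp [hMeq]))) hpq
        tauto
      exact key q p hpq.symm (by rw [hMeq, Finset.pair_comm]) hqp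
  have h1 : M.card = 1 := by
    have := Finset.card_pos.mpr hMne
    omega
  obtain ⟨z, hMz⟩ := Finset.card_eq_one.mp h1
  have hzt : z ∈ t := hMt (by simp [hMz])
  have hzu : z ∈ u := hMu (by simp [hMz])
  have hinnz : inn r t z = ∅ := retentive_singleton r (hMz ▸ hM.1)
  have hcond : ∀ w ∈ t, w ≠ z → ¬ r w z := by
    intro w hw hwz hrwz
    have : w ∈ inn r t z := (mem_inn r).mpr ⟨hwz, hw, hrwz⟩
    rw [hinnz] at this
    simp at this
  refine ⟨z, hzt, ?_, hcond⟩
  intro y hy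
  obtain ⟨M', hyM', hM'⟩ := (mem_tau_iff r).mp hy
  by_cases hzM' : z ∈ M'
  · have hret : Retentive r t {z} := singleton_retentive r hzt hinnz
    have := hM'.2 {z} hret (Finset.singleton_subset_iff.mpr hzM')
    rw [← this] at hyM'
    simpa using hyM'
  · have hM'u : M' ⊆ u.erase z := by
      intro y' hy'
      refine Finset.mem_erase.mpr ⟨?_, htau ((mem_tau_iff r).mpr ⟨M', hy', hM'⟩)⟩
      rintro rfl
      exact hzM' hy'
    have hcard' : M'.card ≤ 1 := by
      have h2 := Finset.card_le_card hM'u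
      have h3 := Finset.card_erase_of_mem hzu
      omega
    have hcard'' : M'.card = 1 := by
      have := Finset.card_pos.mpr hM'.1.2.1
      omega
    obtain ⟨y', hM'y⟩ := Finset.card_eq_one.mp hcard''
    have hy't : y' ∈ t := hM'.1.1 (by simp [hM'y])
    have hinny : inn r t y' = ∅ := retentive_singleton r (hM'y ▸ hM'.1)
    have hzy : z ≠ y' := by
      rintro rfl
      exact hzM' (by simp [hM'y])
    have : ¬ r z y' := by
      intro h
      have : z ∈ inn r t y' := (mem_inn r).mpr ⟨hzy, hzt, h⟩
      rw [hinny] at this; simp at this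
    have hryz : r y' z := by
      have := hT.2 z (hts hzt) y' (hts hy't) hzy
      tauto
    exact absurd (hcond y' hy't (Ne.symm hzy) hryz) (by tauto)

end Lemmas2

theorem stmt7 [DecidableEq V] (r : V → V → Prop) [DecidableRel r] (s : Finset V)
    (hT : IsTournament r s) (R : Finset V) (hR : MinRetentive r s R) :
    R.card ≠ 4 := by
  classical
  intro hcard
  obtain ⟨⟨hRs, hRne, hRret⟩, hRmin⟩ := hR
  -- any nonempty "closed" subset of R equals R
  have hclosed : ∀ B : Finset V, B.Nonempty → B ⊆ R →
      (∀ v ∈ B, (inn r s v).Nonempty → tau r (inn r s v) ⊆ ↑B) → B = R := by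
    intro B hBne hBR hB
    exact hRmin B ⟨hBR.trans hRs, hBne, hB⟩ hBR
  -- every vertex of R has an in-neighbor in s
  have hinn : ∀ v ∈ R, (inn r s v).Nonempty := by
    intro v hv
    by_contra h
    rw [Finset.not_nonempty_iff_eq_empty] at h
    have h1 : ({v} : Finset V) = R := by
      refine hclosed {v} ⟨v, Finset.mem_singleton_self v⟩
        (Finset.singleton_subset_iff.mpr hv) ?_
      intro u hu hne
      rw [Finset.mem_singleton] at hu
      subst hu
      rw [h] at hne
      exact absurd hne (by simp)
    rw [← h1] at hcard
    simp at hcard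
  have htauR : ∀ v ∈ R, tau r (inn r s v) ⊆ ↑(R ∩ inn r s v) := by
    intro v hv w hw
    rw [Finset.coe_inter]
    exact ⟨hRret v hv (hinn v hv) hw, tau_subset r _ hw⟩
  by_cases hle : ∀ v ∈ R, (R ∩ inn r s v).card ≤ 2
  · -- Case 1: every vertex has at most 2 in-neighbors within R
    have hsm : ∀ v ∈ R, ∃ z ∈ R, z ≠ v ∧ r z v ∧ tau r (inn r s v) ⊆ ({z} : Set V) ∧
        ∀ w ∈ R, r w v → w ≠ z → ¬ r w z := by
      intro v hv
      obtain ⟨z, hzt, hz1, hz2⟩ := tau_small r hT (inn_subset r s v) (hinn v hv)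
        (hle v hv) (htauR v hv)
      obtain ⟨y, hy⟩ := tau_nonempty r (hinn v hv)
      have hyz : y = z := hz1 hy
      have hzR : z ∈ R := hRret v hv (hinn v hv) (hyz ▸ hy)
      have hzi := (mem_inn r).mp hzt
      refine ⟨z, hzR, hzi.1, hzi.2.2, hz1, ?_⟩
      intro w hw hrwv hwz
      have hwv : w ≠ v := by
        rintro rfl
        exact hT.1 w (hRs hw) hrwv
      exact hz2 w ((mem_inn r).mpr ⟨hwv, hRs hw, hrwv⟩) hwz
    obtain ⟨a, ha⟩ : R.Nonempty := Finset.card_pos.mp (by omega)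
    obtain ⟨d, hdR, hdna, hrda, htaua, hconda⟩ := hsm a ha
    obtain ⟨c, hcR, hcnd, hrcd, htaud, hcondd⟩ := hsm d hdR
    by_cases hca : c = a
    · rw [hca] at htaud
      have hB : ({a, d} : Finset V) = R := by
        refine hclosed {a, d} ⟨a, by simp⟩ (by
          intro w hw
          rcases Finset.mem_insert.mp hw with rfl | hw
          · exact ha
          · rw [Finset.mem_singleton] at hw; subst hw; exact hdR) ?_
        intro v hv _
        rcases Finset.mem_insert.mp hv with rfl | hv
        · exact htaua.trans (by simp)
        · rw [Finset.mem_singleton] at hv; subst hv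
          exact htaud.trans (by simp)
      rw [← hB] at hcard
      have := Finset.card_insert_le a ({d} : Finset V)
      simp at this
      omega
    obtain ⟨b, hbR, hbnc, hrbc, htauc, hcondc⟩ := hsm c hcR
    by_cases hbd : b = d
    · rw [hbd] at htauc
      have hB : ({d, c} : Finset V) = R := by
        refine hclosed {d, c} ⟨d, by simp⟩ (by
          intro w hw
          rcases Finset.mem_insert.mp hw with rfl | hw
          · exact hdR
          · rw [Finset.mem_singleton] at hw; subst hw; exact hcR) ?_
        intro v hv _
        rcases Finset.mem_insert.mp hv with rfl | hv
        · exact htaud.trans (by simp)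
        · rw [Finset.mem_singleton] at hv; subst hv
          exact htauc.trans (by simp)
      rw [← hB] at hcard
      have := Finset.card_insert_le d ({c} : Finset V)
      simp at this
      omega
    by_cases hba : b = a
    · rw [hba] at htauc
      have hB : ({a, d, c} : Finset V) = R := by
        refine hclosed {a, d, c} ⟨a, by simp⟩ (by
          intro w hw
          simp only [Finset.mem_insert, Finset.mem_singleton] at hw
          rcases hw with rfl | rfl | rfl
          · exact ha
          · exact hdR
          · exact hcR) ?_
        intro v hv _
        simp only [Finset.mem_insert, Finset.mem_singleton] at hv
        rcases hv with rfl | rfl | rfl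
        · exact htaua.trans (by simp)
        · exact htaud.trans (by simp)
        · exact htauc.trans (by simp)
      rw [← hB] at hcard
      have h1 : ({a, d, c} : Finset V).card ≤ 3 := by
        apply le_trans (Finset.card_insert_le _ _)
        have := Finset.card_insert_le d ({c} : Finset V)
        simp at this ⊢
        omega
      omega
    obtain ⟨e, heR, henb, hreb, htaub, hcondb⟩ := hsm b hbR
    -- a, d, c, b distinct, so R = {a, d, c, b}
    have hdc : d ≠ c := Ne.symm hcnd
    have hReq : ({a, d, c, b} : Finset V) = R := by
      apply Finset.eq_of_subset_of_card_le
      · intro w hw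
        simp only [Finset.mem_insert, Finset.mem_singleton] at hw
        rcases hw with rfl | rfl | rfl | rfl
        · exact ha
        · exact hdR
        · exact hcR
        · exact hbR
      · rw [hcard]
        rw [Finset.card_insert_of_notMem (by simp [Ne.symm hdna, Ne.symm hca, Ne.symm hba]),
          Finset.card_insert_of_notMem
            (by simp [hdc, show d ≠ b from fun h => hbd h.symm]),
          Finset.card_insert_of_notMem (by simp [Ne.symm hbnc]),
          Finset.card_singleton]
    have heRmem : e = a ∨ e = d ∨ e = c ∨ e = b := by
      have : e ∈ ({a, d, c, b} : Finset V) := hReq ▸ heR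
      simpa using this
    rcases heRmem with he | he | he | he
    · -- the 4-cycle case: r d a, r c d, r b c, r a b (e = a)
      rw [he] at hreb
      by_cases hrca : r c a
      · exact hconda c hcR hrca hcnd hrcd
      · have hrac : r a c := by
          have := hT.2 c (hRs hcR) a (hRs ha) (fun h => hca h)
          tauto
        exact hcondc a ha hrac (fun h => hba h.symm) hreb
    · -- e = d : B = {d, c, b}
      rw [he] at htaub
      have hB : ({d, c, b} : Finset V) = R := by
        refine hclosed {d, c, b} ⟨d, by simp⟩ (by
          intro w hw
          simp only [Finset.mem_insert, Finset.mem_singleton] at hw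
          rcases hw with rfl | rfl | rfl
          · exact hdR
          · exact hcR
          · exact hbR) ?_
        intro v hv _
        simp only [Finset.mem_insert, Finset.mem_singleton] at hv
        rcases hv with rfl | rfl | rfl
        · exact htaud.trans (by simp)
        · exact htauc.trans (by simp)
        · exact htaub.trans (by simp)
      rw [← hB] at hcard
      have h1 : ({d, c, b} : Finset V).card ≤ 3 := by
        apply le_trans (Finset.card_insert_le _ _)
        have := Finset.card_insert_le c ({b} : Finset V)
        simp at this ⊢
        omega
      omega
    · -- e = c : B = {c, b}
      rw [he] at htaub
      have hB : ({c, b} : Finset V) = R := by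
        refine hclosed {c, b} ⟨c, by simp⟩ (by
          intro w hw
          rcases Finset.mem_insert.mp hw with rfl | hw
          · exact hcR
          · rw [Finset.mem_singleton] at hw; subst hw; exact hbR) ?_
        intro v hv _
        rcases Finset.mem_insert.mp hv with rfl | hv
        · exact htauc.trans (by simp)
        · rw [Finset.mem_singleton] at hv; subst hv
          exact htaub.trans (by simp)
      rw [← hB] at hcard
      have := Finset.card_insert_le c ({b} : Finset V)
      simp at this
      omega
    · exact henb he
  · -- Case 2: some vertex is beaten by all other vertices of R
    push_neg at hle
    obtain ⟨v, hvR, hv2⟩ := hle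
    have hsub : R ∩ inn r s v ⊆ R.erase v := by
      intro w hw
      rw [Finset.mem_inter] at hw
      exact Finset.mem_erase.mpr ⟨((mem_inn r).mp hw.2).1, hw.1⟩
    have hcard3 : (R.erase v).card = 3 := by
      rw [Finset.card_erase_of_mem hvR, hcard]
    have heq : R ∩ inn r s v = R.erase v :=
      Finset.eq_of_subset_of_card_le hsub (by omega)
    have hbeat : ∀ u ∈ R, u ≠ v → ¬ r v u := by
      intro u hu huv hrvu
      have : u ∈ R ∩ inn r s v := heq ▸ Finset.mem_erase.mpr ⟨huv, hu⟩
      have hruv : r u v := ((mem_inn r).mp (Finset.mem_inter.mp this).2).2.2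
      exact ((hT.2 u (hRs hu) v (hRs hvR) huv).mp hruv) hrvu
    have hB : R.erase v = R := by
      refine hclosed (R.erase v) (Finset.card_pos.mp (by omega))
        (Finset.erase_subset v R) ?_
      intro u hu hinnu w hw
      have huR : u ∈ R := Finset.mem_of_mem_erase hu
      have hwR : w ∈ R := hRret u huR hinnu hw
      have hwinn := (mem_inn r).mp ((tau_subset r _) hw)
      have hwv : w ≠ v := by
        rintro rfl
        exact hbeat u huR (Finset.mem_erase.mp hu).1 hwinn.2.2
      exact Finset.mem_coe.mpr (Finset.mem_erase.mpr ⟨hwv, hwR⟩)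
    rw [hB] at hcard3
    omega
end

section
/- Every tournament has at most one minimal τ-retentive set of size 3. -/
variable {V : Type}

section Aux

variable [DecidableEq V] (r : V → V → Prop) [DecidableRel r]

lemma inn_sub (t : Finset V) (v : V) : inn r t v ⊆ t := by
  intro x hx
  rcases Finset.mem_erase.mp hx with ⟨_, hx2⟩
  exact (Finset.mem_filter.mp hx2).1

lemma tau_sub (t : Finset V) : tau r t ⊆ ↑t := by
  intro x hx
  rw [tau] at hx
  obtain ⟨A, hxA, hAs, _⟩ := hx
  exact hAs hxA

lemma tau_nonempty_s9 (t : Finset V) (h : t.Nonempty) : (tau r t).Nonempty := by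
  classical
  set S := t.powerset.filter (fun B : Finset V => B.Nonempty ∧
      ∀ v, v ∈ t → v ∈ B → ((inn r t v).Nonempty → tau r (inn r t v) ⊆ ↑B)) with hSdef
  have hSne : S.Nonempty := by
    refine ⟨t, ?_⟩
    simp only [hSdef, Finset.mem_filter, Finset.mem_powerset]
    refine ⟨Finset.Subset.refl t, h, ?_⟩
    intro v _ _ _
    exact (tau_sub r _).trans (Finset.coe_subset.mpr (inn_sub r t v))
  obtain ⟨B₀, hB₀S, hB₀min⟩ := Finset.exists_min_image S (fun B => B.card) hSne
  simp only [hSdef, Finset.mem_filter, Finset.mem_powerset] at hB₀S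
  obtain ⟨hB₀t, hB₀ne, hB₀cl⟩ := hB₀S
  obtain ⟨x, hx⟩ := hB₀ne
  refine ⟨x, ?_⟩
  rw [tau]
  refine ⟨B₀, hx, hB₀t, ⟨x, hx⟩, hB₀cl, ?_⟩
  rintro B hBt hBss ⟨hBne, hBcl⟩
  have hBS : B ∈ S := by
    simp only [hSdef, Finset.mem_filter, Finset.mem_powerset]
    exact ⟨hBt, hBne, hBcl⟩
  have h1 := hB₀min B hBS
  have h2 : B.card < B₀.card := Finset.card_lt_card hBss
  omega

lemma tau_witness {t : Finset V} {x : V} (hx : x ∈ tau r t) :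
    ∃ A : Finset V, x ∈ A ∧ A ⊆ t ∧ (↑A : Set V) ⊆ tau r t ∧ A.Nonempty ∧
      (∀ v, v ∈ t → v ∈ A → ((inn r t v).Nonempty → tau r (inn r t v) ⊆ ↑A)) := by
  rw [tau] at hx
  obtain ⟨A, hxA, hAt, hAne, hAcl, hAmin⟩ := hx
  refine ⟨A, hxA, hAt, ?_, hAne, hAcl⟩
  intro y hy
  rw [tau]
  exact ⟨A, Finset.mem_coe.mp hy, hAt, hAne, hAcl, hAmin⟩

lemma tau_eq_singleton {t : Finset V} {a : V} (ht : t.Nonempty)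
    (hsub : tau r t ⊆ {a}) : a ∈ t ∧ ∀ w ∈ t, w ≠ a → ¬ r w a := by
  obtain ⟨x, hx⟩ := tau_nonempty_s9 r t ht
  have hxa : x = a := hsub hx
  rw [hxa] at hx
  obtain ⟨A, haA, hAt, hAtau, _, hAcl⟩ := tau_witness r hx
  have hAsub : ∀ y ∈ A, y = a := fun y hy =>
    Set.mem_singleton_iff.mp (hsub (hAtau (Finset.mem_coe.mpr hy)))
  have hat : a ∈ t := hAt haA
  refine ⟨hat, ?_⟩
  intro w hw hwa hrwa
  have hwinn : w ∈ inn r t a :=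
    Finset.mem_erase.mpr ⟨hwa, Finset.mem_filter.mpr ⟨hw, hrwa⟩⟩
  have hne : (inn r t a).Nonempty := ⟨w, hwinn⟩
  have hcl := hAcl a hat haA hne
  obtain ⟨y, hy⟩ := tau_nonempty_s9 r _ hne
  have hya : y = a := hAsub y (Finset.mem_coe.mp (hcl hy))
  have hyinn : y ∈ inn r t a := tau_sub r _ hy
  rw [hya] at hyinn
  exact (Finset.mem_erase.mp hyinn).1 rfl

lemma inn_ne_of_min {s A : Finset V} (hmin : MinRetentive r s A) (hA : A.card = 3)
    {v : V} (hv : v ∈ A) : (inn r s v).Nonempty := by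
  by_contra hne
  have hret : Retentive r s {v} := by
    refine ⟨Finset.singleton_subset_iff.mpr (hmin.1.1 hv), ⟨v, Finset.mem_singleton_self v⟩, ?_⟩
    intro u hu hne2
    rw [Finset.mem_singleton] at hu
    rw [hu] at hne2
    exact absurd hne2 hne
  have heq := hmin.2 {v} hret (Finset.singleton_subset_iff.mpr hv)
  rw [← heq] at hA
  simp at hA

lemma captain_of_unique_inn {s A : Finset V} (hT : IsTournament r s)
    (hmin : MinRetentive r s A) (hA : A.card = 3) {a v : V} (hv : v ∈ A)
    (huniq : ∀ x ∈ A, x ≠ v → r x v → x = a) : IsCaptain r s a v := by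
  have hvs : v ∈ s := hmin.1.1 hv
  have hinn := inn_ne_of_min r hmin hA hv
  have htau := hmin.1.2.2 v hv hinn
  have hsub : tau r (inn r s v) ⊆ {a} := by
    intro x hx
    have hxA : x ∈ A := Finset.mem_coe.mp (htau hx)
    have hxinn : x ∈ inn r s v := tau_sub r _ hx
    rcases Finset.mem_erase.mp hxinn with ⟨hxv, hxf⟩
    exact huniq x hxA hxv (Finset.mem_filter.mp hxf).2
  obtain ⟨hat, hcond⟩ := tau_eq_singleton r hinn hsub
  rcases Finset.mem_erase.mp hat with ⟨hav, haf⟩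
  rcases Finset.mem_filter.mp haf with ⟨has, hrav⟩
  refine ⟨has, hvs, hrav, ?_⟩
  intro w hws hwa hrwv
  have hwv : w ≠ v := by
    intro h
    rw [h] at hrwv
    exact hT.1 v hvs hrwv
  have hwinn : w ∈ inn r s v :=
    Finset.mem_erase.mpr ⟨hwv, Finset.mem_filter.mpr ⟨hws, hrwv⟩⟩
  have hnwa : ¬ r w a := hcond w hwinn hwa
  exact (hT.2 a has w hws (Ne.symm hwa)).mpr hnwa

lemma cap_from_cycle {s A : Finset V} (hT : IsTournament r s)
    (hmin : MinRetentive r s A) (hA : A.card = 3) {a b c : V}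
    (hAe : A = {a, b, c}) (_hab : a ≠ b) (_hac : a ≠ c) (hbc : b ≠ c)
    (h1 : r a b) (h2 : r b c) (_h3 : r c a) : IsCaptain r s a b := by
  have hbA : b ∈ A := by rw [hAe]; simp
  have hcA : c ∈ A := by rw [hAe]; simp
  have hbs : b ∈ s := hmin.1.1 hbA
  have hcs : c ∈ s := hmin.1.1 hcA
  apply captain_of_unique_inn r hT hmin hA hbA
  intro x hxA hxb hrxb
  rw [hAe] at hxA
  simp only [Finset.mem_insert, Finset.mem_singleton] at hxA
  rcases hxA with h | h | h
  · exact h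
  · exact absurd h hxb
  · rw [h] at hrxb
    exact absurd hrxb ((hT.2 b hbs c hcs hbc).mp h2)

lemma cap_triangle {s A : Finset V} (hT : IsTournament r s)
    (hmin : MinRetentive r s A) (hA : A.card = 3) :
    ∃ a b c : V, A = {a, b, c} ∧ a ≠ b ∧ a ≠ c ∧ b ≠ c ∧
      IsCaptain r s a b ∧ IsCaptain r s b c ∧ IsCaptain r s c a := by
  obtain ⟨x, y, z, hxy, hxz, hyz, hAe⟩ := Finset.card_eq_three.mp hA
  have hxA : x ∈ A := by rw [hAe]; simp
  have hyA : y ∈ A := by rw [hAe]; simp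
  have hzA : z ∈ A := by rw [hAe]; simp
  have hxs : x ∈ s := hmin.1.1 hxA
  have hys : y ∈ s := hmin.1.1 hyA
  have hzs : z ∈ s := hmin.1.1 hzA
  have exin : ∀ v ∈ A, ∃ u ∈ A, u ≠ v ∧ r u v := by
    intro v hv
    have hinn := inn_ne_of_min r hmin hA hv
    obtain ⟨w, hw⟩ := tau_nonempty_s9 r _ hinn
    have hwA : w ∈ A := Finset.mem_coe.mp (hmin.1.2.2 v hv hinn hw)
    have hwinn : w ∈ inn r s v := tau_sub r _ hw
    rcases Finset.mem_erase.mp hwinn with ⟨hwv, hwf⟩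
    exact ⟨w, hwA, hwv, (Finset.mem_filter.mp hwf).2⟩
  have asym : ∀ u ∈ s, ∀ v ∈ s, u ≠ v → r u v → r v u → False := by
    intro u hu v hv huv ha hb
    exact (hT.2 u hu v hv huv).mp ha hb
  have tot : ∀ u ∈ s, ∀ v ∈ s, u ≠ v → ¬ r u v → r v u := by
    intro u hu v hv huv h
    exact (hT.2 v hv u hu (Ne.symm huv)).mpr h
  have source_absurd : ∀ v p q : V, v ∈ A → p ∈ A → q ∈ A → v ≠ p → v ≠ q →
      r v p → r v q → (∀ u ∈ A, u = v ∨ u = p ∨ u = q) → False := by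
    intro v p q hv hp hq hvp hvq ha hb hcover
    obtain ⟨u, huA, huv, hruv⟩ := exin v hv
    rcases hcover u huA with rfl | rfl | rfl
    · exact huv rfl
    · exact asym v (hmin.1.1 hv) u (hmin.1.1 hp) hvp ha hruv
    · exact asym v (hmin.1.1 hv) u (hmin.1.1 hq) hvq hb hruv
  have coverx : ∀ u ∈ A, u = x ∨ u = y ∨ u = z := by
    intro u hu; rw [hAe] at hu
    simpa using hu
  by_cases h1 : r x y <;> by_cases h2 : r x z <;> by_cases h3 : r y z
  · exact absurd (source_absurd x y z hxA hyA hzA hxy hxz h1 h2 coverx) not_false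
  · exact absurd (source_absurd x y z hxA hyA hzA hxy hxz h1 h2 coverx) not_false
  · -- cycle x → y → z → x
    have h2' : r z x := tot x hxs z hzs hxz h2
    refine ⟨x, y, z, hAe, hxy, hxz, hyz, ?_, ?_, ?_⟩
    · exact cap_from_cycle r hT hmin hA hAe hxy hxz hyz h1 h3 h2'
    · have hAe2 : A = {y, z, x} := by rw [hAe]; ext t; simp; tauto
      exact cap_from_cycle r hT hmin hA hAe2 hyz (Ne.symm hxy) (Ne.symm hxz) h3 h2' h1
    · have hAe3 : A = {z, x, y} := by rw [hAe]; ext t; simp; tauto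
      exact cap_from_cycle r hT hmin hA hAe3 (Ne.symm hxz) (Ne.symm hyz) hxy h2' h1 h3
  · -- x→y, z→x, z→y : source z
    have h2' : r z x := tot x hxs z hzs hxz h2
    have h3' : r z y := tot y hys z hzs hyz h3
    refine absurd (source_absurd z x y hzA hxA hyA (Ne.symm hxz) (Ne.symm hyz) h2' h3'
      (fun u hu => by rcases coverx u hu with h|h|h <;> tauto)) not_false
  · -- y→x, x→z, y→z : source y
    have h1' : r y x := tot x hxs y hys hxy h1
    refine absurd (source_absurd y x z hyA hxA hzA (Ne.symm hxy) hyz h1' h3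
      (fun u hu => by rcases coverx u hu with h|h|h <;> tauto)) not_false
  · -- cycle y → x → z → y
    have h1' : r y x := tot x hxs y hys hxy h1
    have h3' : r z y := tot y hys z hzs hyz h3
    refine ⟨y, x, z, by rw [hAe]; ext t; simp; tauto, Ne.symm hxy, hyz, hxz, ?_, ?_, ?_⟩
    · have hAe2 : A = {y, x, z} := by rw [hAe]; ext t; simp; tauto
      exact cap_from_cycle r hT hmin hA hAe2 (Ne.symm hxy) hyz hxz h1' h2 h3'
    · have hAe2 : A = {x, z, y} := by rw [hAe]; ext t; simp; tauto
      exact cap_from_cycle r hT hmin hA hAe2 hxz hxy (Ne.symm hyz) h2 h3' h1'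
    · have hAe2 : A = {z, y, x} := by rw [hAe]; ext t; simp; tauto
      exact cap_from_cycle r hT hmin hA hAe2 (Ne.symm hyz) (Ne.symm hxz) (Ne.symm hxy) h3' h1' h2
  · -- y→x, z→x, y→z : source y
    have h1' : r y x := tot x hxs y hys hxy h1
    refine absurd (source_absurd y x z hyA hxA hzA (Ne.symm hxy) hyz h1' h3
      (fun u hu => by rcases coverx u hu with h|h|h <;> tauto)) not_false
  · -- y→x, z→x, z→y : source z
    have h2' : r z x := tot x hxs z hzs hxz h2
    have h3' : r z y := tot y hys z hzs hyz h3
    refine absurd (source_absurd z x y hzA hxA hyA (Ne.symm hxz) (Ne.symm hyz) h2' h3'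
      (fun u hu => by rcases coverx u hu with h|h|h <;> tauto)) not_false

lemma captain_unique {s : Finset V} (hT : IsTournament r s) {x y v : V}
    (hx : IsCaptain r s x v) (hy : IsCaptain r s y v) : x = y := by
  by_contra hne
  have h1 : r y x := hy.2.2.2 x hx.1 hne hx.2.2.1
  have h2 : r x y := hx.2.2.2 y hy.1 (Ne.symm hne) hy.2.2.1
  exact (hT.2 x hx.1 y hy.1 hne).mp h2 h1

lemma pred_of_mem {s : Finset V} {a b c v : V} (cab : IsCaptain r s a b)
    (cbc : IsCaptain r s b c) (cca : IsCaptain r s c a)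
    (hv : v ∈ ({a, b, c} : Finset V)) :
    ∃ p q, IsCaptain r s p v ∧ IsCaptain r s q p ∧
      ({a, b, c} : Finset V) = {v, p, q} := by
  simp only [Finset.mem_insert, Finset.mem_singleton] at hv
  rcases hv with rfl | rfl | rfl
  · exact ⟨c, b, cca, cbc, by ext t; simp; tauto⟩
  · exact ⟨a, c, cab, cca, by ext t; simp; tauto⟩
  · exact ⟨b, a, cbc, cab, by ext t; simp; tauto⟩

lemma no_beat_pair {s : Finset V} (hT : IsTournament r s) {u w x : V}
    (hc : IsCaptain r s u w) (hxs : x ∈ s) (hxu : x ≠ u)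
    (ha : r x u) (hb : r x w) : False := by
  have hux : r u x := hc.2.2.2 x hxs hxu hb
  exact (hT.2 x hxs u hc.1 hxu).mp ha hux

end Aux

theorem stmt9 [DecidableEq V] (r : V → V → Prop) [DecidableRel r] (s : Finset V)
    (hT : IsTournament r s) (R1 R2 : Finset V)
    (h1 : MinRetentive r s R1) (h2 : MinRetentive r s R2)
    (hc1 : R1.card = 3) (hc2 : R2.card = 3) :
    R1 = R2 := by
  obtain ⟨a, b, c, hR1, hab, hac, hbc, cab, cbc, cca⟩ := cap_triangle r hT h1 hc1
  obtain ⟨a', b', c', hR2, hab', hac', hbc', cab', cbc', cca'⟩ := cap_triangle r hT h2 hc2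
  by_cases hint : ∃ v, v ∈ R1 ∧ v ∈ R2
  · obtain ⟨v, hv1, hv2⟩ := hint
    obtain ⟨p1, q1, hp1, hq1, he1⟩ := pred_of_mem r cab cbc cca (hR1 ▸ hv1)
    obtain ⟨p2, q2, hp2, hq2, he2⟩ := pred_of_mem r cab' cbc' cca' (hR2 ▸ hv2)
    have hp : p1 = p2 := captain_unique r hT hp1 hp2
    subst hp
    have hq : q1 = q2 := captain_unique r hT hq1 hq2
    subst hq
    rw [hR1, he1, hR2, he2]
  · exfalso
    push_neg at hint
    have hna : a ∉ R2 := hint a (by rw [hR1]; simp)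
    have hnc : c ∉ R2 := hint c (by rw [hR1]; simp)
    rw [hR2] at hna hnc
    simp only [Finset.mem_insert, Finset.mem_singleton, not_or] at hna hnc
    obtain ⟨haa', hab'', hac''⟩ := hna
    obtain ⟨hca', hcb', hcc'⟩ := hnc
    have has : a ∈ s := cab.1
    have hcs : c ∈ s := cca.1
    have ha's : a' ∈ s := cab'.1
    have hb's : b' ∈ s := cbc'.1
    have hc's : c' ∈ s := cca'.1
    have tot : ∀ u ∈ s, ∀ v ∈ s, u ≠ v → ¬ r u v → r v u := by
      intro u hu v hv huv h
      exact (hT.2 v hv u hu (Ne.symm huv)).mpr h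
    -- c absorbs in-neighbors of a
    have habs : ∀ w ∈ s, w ≠ c → r w a → r c w := cca.2.2.2
    by_cases h1 : r a' a <;> by_cases h2 : r b' a <;> by_cases h3 : r c' a
    · exact no_beat_pair r hT cab' hcs hca' (habs a' ha's (Ne.symm hca') h1)
        (habs b' hb's (Ne.symm hcb') h2)
    · exact no_beat_pair r hT cab' hcs hca' (habs a' ha's (Ne.symm hca') h1)
        (habs b' hb's (Ne.symm hcb') h2)
    · exact no_beat_pair r hT cca' hcs hcc' (habs c' hc's (Ne.symm hcc') h3)
        (habs a' ha's (Ne.symm hca') h1)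
    · exact no_beat_pair r hT cbc' has hab'' (tot b' hb's a has (Ne.symm hab'') h2)
        (tot c' hc's a has (Ne.symm hac'') h3)
    · exact no_beat_pair r hT cbc' hcs hcb' (habs b' hb's (Ne.symm hcb') h2)
        (habs c' hc's (Ne.symm hcc') h3)
    · exact no_beat_pair r hT cca' has hac'' (tot c' hc's a has (Ne.symm hac'') h3)
        (tot a' ha's a has (Ne.symm haa') h1)
    · exact no_beat_pair r hT cab' has haa' (tot a' ha's a has (Ne.symm haa') h1)
        (tot b' hb's a has (Ne.symm hab'') h2)
    · exact no_beat_pair r hT cab' has haa' (tot a' ha's a has (Ne.symm haa') h1)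
        (tot b' hb's a has (Ne.symm hab'') h2)
end
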